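/- Let D be an n×n Hermitian complex matrix with all eigenvalues of absolute value ≥ λ > 0, let p be an idempotent Hermitian matrix, and suppose ‖[D,p]‖ < λ. Then for every u ∈ [0,1], the matrix D_u = D + u(2p-1)[D,p] is invertible. -/

import Mathlib

open scoped Matrix.Norms.L2Operator

open Matrix in
lemma key_lower_bound (n : ℕ) (D : Matrix (Fin n) (Fin n) ℂ)
    (hD : D.IsHermitian) (lam : ℝ) (hlam : 0 ≤ lam)
    (hgap : ∀ i, lam ≤ |hD.eigenvalues i|) (x : EuclideanSpace ℂ (Fin n)) :
    lam * ‖x‖ ≤ ‖toEuclideanCLM (𝕜 := ℂ) D x‖ := by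
  set b := hD.eigenvectorBasis with hb
  have hsymm := (Matrix.isHermitian_iff_isSymmetric.1 hD)
  have h1 : ∀ i, toEuclideanLin D (b i) = (hD.eigenvalues i : ℂ) • b i := by
    intro i
    have h := hD.mulVec_eigenvectorBasis i
    ext j
    simpa [Matrix.toEuclideanLin_apply, Complex.real_smul] using congrFun h j
  have hrepr : ∀ i, b.repr (toEuclideanCLM (𝕜 := ℂ) D x) i
      = (hD.eigenvalues i : ℂ) * b.repr x i := by
    intro i
    rw [b.repr_apply_apply, b.repr_apply_apply]
    have : (toEuclideanCLM (𝕜 := ℂ) D) x = toEuclideanLin D x := rfl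
    rw [this, ← hsymm (b i) x, h1 i, inner_smul_left]
    simp [Complex.conj_ofReal]
  have hnorm : ∀ y : EuclideanSpace ℂ (Fin n), ‖y‖ ^ 2 = ∑ i, ‖b.repr y i‖ ^ 2 := by
    intro y
    rw [← b.repr.norm_map y, EuclideanSpace.norm_eq, Real.sq_sqrt (by positivity)]
  have hsq : (lam * ‖x‖) ^ 2 ≤ ‖toEuclideanCLM (𝕜 := ℂ) D x‖ ^ 2 := by
    rw [mul_pow, hnorm, hnorm, Finset.mul_sum]
    apply Finset.sum_le_sum
    intro i _
    rw [hrepr i, norm_mul, mul_pow, Complex.norm_real, Real.norm_eq_abs]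
    have := hgap i
    gcongr
  have h2 : 0 ≤ lam * ‖x‖ := by positivity
  nlinarith [norm_nonneg (toEuclideanCLM (𝕜 := ℂ) D x)]


/-- Invertibility along the path (Lemma 3.2): if the Hermitian matrix `D` has
all eigenvalues of absolute value `≥ λ > 0`, `p` is a Hermitian idempotent,
and `‖[D,p]‖ < λ`, then `D_u = D + u(2p-1)[D,p]` is invertible for `u ∈ [0,1]`. -/
theorem path_invertible (n : ℕ) (D p : Matrix (Fin n) (Fin n) ℂ)
    (hD : D.IsHermitian) (hp : p * p = p) (hpH : p.IsHermitian)
    (lam : ℝ) (hlam : 0 < lam)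
    (hgap : ∀ i, lam ≤ |hD.eigenvalues i|)
    (hcomm : ‖D * p - p * D‖ < lam) :
    ∀ u : ℝ, u ∈ Set.Icc (0 : ℝ) 1 →
      IsUnit (D + u • ((2 • p - 1) * (D * p - p * D))) := by
  intro u hu
  obtain ⟨hu0, hu1⟩ := hu
  rcases Nat.eq_zero_or_pos n with hn | hn
  · subst hn
    exact isUnit_of_subsingleton _
  haveI : NeZero n := ⟨hn.ne'⟩
  set s : Matrix (Fin n) (Fin n) ℂ := 2 • p - 1 with hs
  set c : Matrix (Fin n) (Fin n) ℂ := D * p - p * D with hc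
  -- s is a self-adjoint unitary
  have hss : s * s = 1 := by
    have h4 : s * s = 4 • (p * p) - 4 • p + 1 := by rw [hs]; noncomm_ring
    rw [h4, hp]
    abel
  have hsstar : star s = s := by
    simp only [hs, star_sub, star_one, star_smul]
    congr 1
    · simp [hpH.eq, Matrix.star_eq_conjTranspose]
    -- star (2 • p) = 2 • star p
  have hsU : s ∈ unitary (Matrix (Fin n) (Fin n) ℂ) := by
    rw [Unitary.mem_iff, hsstar]
    exact ⟨hss, hss⟩
  have hsnorm : ‖s‖ = 1 := CStarRing.norm_of_mem_unitary hsU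
  -- bound on the perturbation
  have hT : ‖s * c‖ < lam := by
    calc ‖s * c‖ ≤ ‖s‖ * ‖c‖ := Matrix.l2_opNorm_mul s c
    _ = ‖c‖ := by rw [hsnorm, one_mul]
    _ < lam := hcomm
  -- show injectivity of mulVec
  rw [← Matrix.mulVec_injective_iff_isUnit]
  set A : Matrix (Fin n) (Fin n) ℂ := D + u • (s * c) with hA
  have hker : ∀ z : Fin n → ℂ, Matrix.mulVec A z = 0 → z = 0 := by
    intro z hz
    set Z : EuclideanSpace ℂ (Fin n) := (WithLp.equiv 2 (Fin n → ℂ)).symm z with hZ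
    have hAz : Matrix.toEuclideanCLM (𝕜 := ℂ) A Z = 0 := by
      rw [hZ]; change WithLp.toLp 2 (Matrix.mulVec A z) = 0
      simp [hz]
    have hsmul : A = D + ((u : ℂ)) • (s * c) := by
      rw [hA]
      congr 1
    have hDZ : Matrix.toEuclideanCLM (𝕜 := ℂ) D Z
        = -((u : ℂ) • Matrix.toEuclideanCLM (𝕜 := ℂ) (s * c) Z) := by
      have := hAz
      rw [hsmul] at this
      rw [map_add, map_smul] at this
      simp only [ContinuousLinearMap.add_apply, ContinuousLinearMap.smul_apply] at this
      linear_combination (norm := module) this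
    have h1 : lam * ‖Z‖ ≤ ‖Matrix.toEuclideanCLM (𝕜 := ℂ) D Z‖ :=
      key_lower_bound n D hD lam hlam.le hgap Z
    have h2 : ‖Matrix.toEuclideanCLM (𝕜 := ℂ) D Z‖ ≤ u * (‖s * c‖ * ‖Z‖) := by
      rw [hDZ, norm_neg, norm_smul]
      have : ‖(u : ℂ)‖ = u := by
        rw [Complex.norm_real, Real.norm_eq_abs, abs_of_nonneg hu0]
      rw [this]
      have hle : ‖Matrix.toEuclideanCLM (𝕜 := ℂ) (s * c) Z‖ ≤ ‖s * c‖ * ‖Z‖ := by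
        rw [Matrix.cstar_norm_def]
        exact (Matrix.toEuclideanCLM (𝕜 := ℂ) (s * c)).le_opNorm Z
      exact mul_le_mul_of_nonneg_left hle hu0
    have hZ0 : ‖Z‖ = 0 := by
      by_contra hne
      have hpos : 0 < ‖Z‖ := lt_of_le_of_ne (norm_nonneg _) (Ne.symm hne)
      have : lam * ‖Z‖ < lam * ‖Z‖ := by
        calc lam * ‖Z‖ ≤ u * (‖s * c‖ * ‖Z‖) := le_trans h1 h2
        _ ≤ 1 * (‖s * c‖ * ‖Z‖) := by
            apply mul_le_mul_of_nonneg_right hu1 (by positivity)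
        _ = ‖s * c‖ * ‖Z‖ := one_mul _
        _ < lam * ‖Z‖ := by exact mul_lt_mul_of_pos_right hT hpos
      exact absurd this (lt_irrefl _)
    have : Z = 0 := norm_eq_zero.mp hZ0
    have := congrArg (WithLp.equiv 2 (Fin n → ℂ)) this
    simpa [hZ] using this
  intro x y hxy
  have : Matrix.mulVec A (x - y) = 0 := by
    rw [Matrix.mulVec_sub, hxy, sub_self]
  have := hker _ this
  exact sub_eq_zero.mp this
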